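/- In the setting of the zero-sum sub-game at a stopping time σ, for every stopping strategy (ρ₀,ρ₁) ∈ 𝔗_σ one has E[U(ρ[τ^ε_σ], τ^ε_σ[ρ]) | 𝓕_σ] ≤ v_σ + 4ε almost surely, where τ^ε_σ := (τ_σ^ε, τ_h) and ρ = (ρ₀,ρ₁). -/

import Mathlib

/-!
Common setup for "On the non-zero-sum stopping game ending at the maximum of the stopping
strategies".  Time is indexed by `[0,∞] = ℝ≥0∞`.  Since `Ω` is at most countable and `ℙ`
charges every point, essential suprema/infima over families of stopping times coincide with
the pointwise ones, which is how they are formalized below.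
-/

open MeasureTheory Filter Set
open scoped ENNReal Topology

noncomputable section

namespace StoppingGames

variable {Ω : Type*} [mΩ : MeasurableSpace Ω]

/-- `|a - b|` on `[0,∞]`, via truncated subtraction. -/
def dd (a b : ℝ≥0∞) : ℝ≥0∞ := (a - b) + (b - a)

/-- `𝒯`, the set of stopping times with values in `[0,∞]`. -/
def ST (𝓕 : Filtration ℝ≥0∞ mΩ) : Set (Ω → ℝ≥0∞) := {τ | IsStoppingTime 𝓕 (fun ω => (τ ω : WithTop ℝ≥0∞))}

/-- `𝒯_σ`, the stopping times no less than `σ`. -/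
def STge (𝓕 : Filtration ℝ≥0∞ mΩ) (σ : Ω → ℝ≥0∞) : Set (Ω → ℝ≥0∞) :=
  {τ | IsStoppingTime 𝓕 (fun ω => (τ ω : WithTop ℝ≥0∞)) ∧ ∀ ω, σ ω ≤ τ ω}

/-- `𝒯_{t+}`, the stopping times strictly greater than `t`. -/
def STgt (𝓕 : Filtration ℝ≥0∞ mΩ) (t : ℝ≥0∞) : Set (Ω → ℝ≥0∞) :=
  {τ | IsStoppingTime 𝓕 (fun ω => (τ ω : WithTop ℝ≥0∞)) ∧ ∀ ω, t < τ ω}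

/-- The class `𝕋` of jointly measurable maps `φ : [0,∞] × Ω → [0,∞]` with
`φ(t,·) ∈ 𝒯_{t+}` for every finite `t`. -/
def IsTT (𝓕 : Filtration ℝ≥0∞ mΩ) (φ : ℝ≥0∞ → Ω → ℝ≥0∞) : Prop :=
  Measurable (Function.uncurry φ) ∧ ∀ t : ℝ≥0∞, t ≠ ∞ → φ t ∈ STgt 𝓕 t

/-- A stopping strategy `ρ = (ρ₀, ρ₁) ∈ 𝔗`. -/
def IsStrategy (𝓕 : Filtration ℝ≥0∞ mΩ) (ρ : (Ω → ℝ≥0∞) × (ℝ≥0∞ → Ω → ℝ≥0∞)) : Prop :=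
  IsStoppingTime 𝓕 (fun ω => (ρ.1 ω : WithTop ℝ≥0∞)) ∧ IsTT 𝓕 ρ.2

/-- `𝔗_σ`, the stopping strategies whose first component is `≥ σ`. -/
def IsStrategyGe (𝓕 : Filtration ℝ≥0∞ mΩ) (σ : Ω → ℝ≥0∞)
    (ρ : (Ω → ℝ≥0∞) × (ℝ≥0∞ → Ω → ℝ≥0∞)) : Prop :=
  IsStrategy 𝓕 ρ ∧ ∀ ω, σ ω ≤ ρ.1 ω

/-- `ρ[τ] = ρ₀ 1_{ρ₀ ≤ τ₀} + ρ₁(τ₀) 1_{ρ₀ > τ₀}`. -/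
def play (ρ τ : (Ω → ℝ≥0∞) × (ℝ≥0∞ → Ω → ℝ≥0∞)) : Ω → ℝ≥0∞ := fun ω =>
  if ρ.1 ω ≤ τ.1 ω then ρ.1 ω else ρ.2 (τ.1 ω) ω

/-- `u(ρ,τ) = E[U(ρ[τ], τ[ρ])]`. -/
def payoff (μ : Measure Ω) (U : ℝ≥0∞ → ℝ≥0∞ → Ω → ℝ)
    (ρ τ : (Ω → ℝ≥0∞) × (ℝ≥0∞ → Ω → ℝ≥0∞)) : ℝ :=
  ∫ ω, U (play ρ τ ω) (play τ ρ ω) ω ∂μ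

/-- `u_σ(ρ,τ) = E[U(ρ[τ], τ[ρ]) | m]`. -/
def condPayoff (μ : Measure Ω) (m : MeasurableSpace Ω) (U : ℝ≥0∞ → ℝ≥0∞ → Ω → ℝ)
    (ρ τ : (Ω → ℝ≥0∞) × (ℝ≥0∞ → Ω → ℝ≥0∞)) : Ω → ℝ :=
  μ[fun ω => U (play ρ τ ω) (play τ ρ ω) ω | m]

/-- The grid point `n·h ∈ [0,∞]`. -/
def grid (h : ℝ) (n : ℕ) : ℝ≥0∞ := ENNReal.ofReal (n * h)

/-- `⌊t/h⌋ + 1`. -/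
def gridIdx (h : ℝ) (t : ℝ≥0∞) : ℕ := ⌊t.toReal / h⌋₊ + 1

/-- `ρ_h(t) := ρ̄((⌊t/h⌋+1)h)` for finite `t`, and `ρ_h(∞) := ∞`. -/
def gridStrat (h : ℝ) (bar : ℕ → Ω → ℝ≥0∞) : ℝ≥0∞ → Ω → ℝ≥0∞ := fun t ω =>
  if t = ∞ then ∞ else bar (gridIdx h t) ω

/-- Evaluation `φ(σ) : ω ↦ φ(σ(ω), ω)` of a time-indexed family along a random time. -/
def evalAt (φ : ℝ≥0∞ → Ω → ℝ≥0∞) (σ : Ω → ℝ≥0∞) : Ω → ℝ≥0∞ := fun ω => φ (σ ω) ω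

/-- `X_t = ess inf_{σ ∈ 𝒯_t} E[U(t,σ) | 𝓕_t]` (pointwise infimum, which coincides with the
essential one since `Ω` is countable and every point is charged). -/
def X1v (μ : Measure Ω) (𝓕 : Filtration ℝ≥0∞ mΩ) (U : ℝ≥0∞ → ℝ≥0∞ → Ω → ℝ)
    (t : ℝ≥0∞) (ω : Ω) : ℝ :=
  ⨅ σ : STge 𝓕 (fun _ => t), (μ[fun ω' => U t (σ.1 ω') ω' | 𝓕 t]) ω

/-- `Y_t = ess sup_{σ ∈ 𝒯_t} E[U(σ,t) | 𝓕_t]`. -/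
def Y1v (μ : Measure Ω) (𝓕 : Filtration ℝ≥0∞ mΩ) (U : ℝ≥0∞ → ℝ≥0∞ → Ω → ℝ)
    (t : ℝ≥0∞) (ω : Ω) : ℝ :=
  ⨆ σ : STge 𝓕 (fun _ => t), (μ[fun ω' => U (σ.1 ω') t ω' | 𝓕 t]) ω

/-- Player 2: `X²_t = ess sup_{σ ∈ 𝒯_t} E[U²(t,σ) | 𝓕_t]`. -/
def X2v (μ : Measure Ω) (𝓕 : Filtration ℝ≥0∞ mΩ) (U : ℝ≥0∞ → ℝ≥0∞ → Ω → ℝ)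
    (t : ℝ≥0∞) (ω : Ω) : ℝ :=
  ⨆ σ : STge 𝓕 (fun _ => t), (μ[fun ω' => U t (σ.1 ω') ω' | 𝓕 t]) ω

/-- Player 2: `Y²_t = ess inf_{σ ∈ 𝒯_t} E[U²(σ,t) | 𝓕_t]`. -/
def Y2v (μ : Measure Ω) (𝓕 : Filtration ℝ≥0∞ mΩ) (U : ℝ≥0∞ → ℝ≥0∞ → Ω → ℝ)
    (t : ℝ≥0∞) (ω : Ω) : ℝ :=
  ⨅ σ : STge 𝓕 (fun _ => t), (μ[fun ω' => U (σ.1 ω') t ω' | 𝓕 t]) ω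

/-- `Z_t = U(t,t)`. -/
def Zv (U : ℝ≥0∞ → ℝ≥0∞ → Ω → ℝ) : ℝ≥0∞ → Ω → ℝ := fun t ω => U t t ω

/-- `X_{ρ₀} 1_{ρ₀ < τ₀} + Y_{τ₀} 1_{ρ₀ > τ₀} + Z_{ρ₀} 1_{ρ₀ = τ₀}`. -/
def dynkinKernel (X Y Z : ℝ≥0∞ → Ω → ℝ) (ρ₀ τ₀ : Ω → ℝ≥0∞) (ω : Ω) : ℝ :=
  if ρ₀ ω < τ₀ ω then X (ρ₀ ω) ω else if τ₀ ω < ρ₀ ω then Y (τ₀ ω) ω else Z (ρ₀ ω) ω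

/-- The Dynkin-game payoff `V(ρ₀,τ₀)`. -/
def dynkinV (μ : Measure Ω) (X Y Z : ℝ≥0∞ → Ω → ℝ) (ρ₀ τ₀ : Ω → ℝ≥0∞) : ℝ :=
  ∫ ω, dynkinKernel X Y Z ρ₀ τ₀ ω ∂μ

/-- The conditional Dynkin-game payoff. -/
def condDynkin (μ : Measure Ω) (m : MeasurableSpace Ω) (X Y Z : ℝ≥0∞ → Ω → ℝ)
    (ρ₀ τ₀ : Ω → ℝ≥0∞) : Ω → ℝ :=
  μ[fun ω => dynkinKernel X Y Z ρ₀ τ₀ ω | m]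

/-- `v_t¹`, the (sup-inf) value of the conditional Dynkin game `G_t¹` with payoffs
`(X¹, Y¹, Z¹)` built from `U¹`. -/
def v1v (μ : Measure Ω) (𝓕 : Filtration ℝ≥0∞ mΩ) (U : ℝ≥0∞ → ℝ≥0∞ → Ω → ℝ)
    (t : ℝ≥0∞) (ω : Ω) : ℝ :=
  ⨆ ρ₀ : STge 𝓕 (fun _ => t), ⨅ τ₀ : STge 𝓕 (fun _ => t),
    condDynkin μ (𝓕 t) (X1v μ 𝓕 U) (Y1v μ 𝓕 U) (Zv U) ρ₀.1 τ₀.1 ω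

/-- `v_t²`, the (inf-sup) value of the conditional Dynkin game `G_t²` with payoffs
`(X², Y², Z²)` built from `U²`. -/
def v2v (μ : Measure Ω) (𝓕 : Filtration ℝ≥0∞ mΩ) (U : ℝ≥0∞ → ℝ≥0∞ → Ω → ℝ)
    (t : ℝ≥0∞) (ω : Ω) : ℝ :=
  ⨅ ρ₀ : STge 𝓕 (fun _ => t), ⨆ τ₀ : STge 𝓕 (fun _ => t),
    condDynkin μ (𝓕 t) (X2v μ 𝓕 U) (Y2v μ 𝓕 U) (Zv U) ρ₀.1 τ₀.1 ω

/-- `W_t¹ = E[U¹(t, τ_h²(t)) | 𝓕_t]`. -/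
def W1v (μ : Measure Ω) (𝓕 : Filtration ℝ≥0∞ mΩ) (U : ℝ≥0∞ → ℝ≥0∞ → Ω → ℝ)
    (h : ℝ) (bar : ℕ → Ω → ℝ≥0∞) (t : ℝ≥0∞) (ω : Ω) : ℝ :=
  (μ[fun ω' => U t (gridStrat h bar t ω') ω' | 𝓕 t]) ω

/-- `W_t² = E[U²(ρ_h¹(t), t) | 𝓕_t]`. -/
def W2v (μ : Measure Ω) (𝓕 : Filtration ℝ≥0∞ mΩ) (U : ℝ≥0∞ → ℝ≥0∞ → Ω → ℝ)
    (h : ℝ) (bar : ℕ → Ω → ℝ≥0∞) (t : ℝ≥0∞) (ω : Ω) : ℝ :=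
  (μ[fun ω' => U (gridStrat h bar t ω') t ω' | 𝓕 t]) ω

/-- `μ₁ = inf {t ≥ 0 : v_t¹ ≤ W_t¹ + ε}`. -/
def mu1T (μ : Measure Ω) (𝓕 : Filtration ℝ≥0∞ mΩ) (U : ℝ≥0∞ → ℝ≥0∞ → Ω → ℝ)
    (h ε : ℝ) (bar : ℕ → Ω → ℝ≥0∞) : Ω → ℝ≥0∞ := fun ω =>
  sInf {t | v1v μ 𝓕 U t ω ≤ W1v μ 𝓕 U h bar t ω + ε}

/-- `μ₂ = inf {t ≥ 0 : v_t² ≤ W_t² + ε}`. -/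
def mu2T (μ : Measure Ω) (𝓕 : Filtration ℝ≥0∞ mΩ) (U : ℝ≥0∞ → ℝ≥0∞ → Ω → ℝ)
    (h ε : ℝ) (bar : ℕ → Ω → ℝ≥0∞) : Ω → ℝ≥0∞ := fun ω =>
  sInf {t | v2v μ 𝓕 U t ω ≤ W2v μ 𝓕 U h bar t ω + ε}

/-- `ρ̄(nh)` is a family of `ε`-optimizers for `Y¹_{nh}`:
`E[U(ρ̄(nh), nh) | 𝓕_{nh}] ≥ Y_{nh} − ε`. -/
def IsOptRho1 (μ : Measure Ω) (𝓕 : Filtration ℝ≥0∞ mΩ) (U : ℝ≥0∞ → ℝ≥0∞ → Ω → ℝ)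
    (ε h : ℝ) (bar : ℕ → Ω → ℝ≥0∞) : Prop :=
  ∀ n : ℕ, bar n ∈ STge 𝓕 (fun _ => grid h n) ∧
    ∀ᵐ ω ∂μ, Y1v μ 𝓕 U (grid h n) ω - ε ≤
      (μ[fun ω' => U (bar n ω') (grid h n) ω' | 𝓕 (grid h n)]) ω

/-- `τ̄(nh)` is a family of `ε`-optimizers for `X¹_{nh}`:
`E[U(nh, τ̄(nh)) | 𝓕_{nh}] ≤ X_{nh} + ε`. -/
def IsOptTau1 (μ : Measure Ω) (𝓕 : Filtration ℝ≥0∞ mΩ) (U : ℝ≥0∞ → ℝ≥0∞ → Ω → ℝ)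
    (ε h : ℝ) (bar : ℕ → Ω → ℝ≥0∞) : Prop :=
  ∀ n : ℕ, bar n ∈ STge 𝓕 (fun _ => grid h n) ∧
    ∀ᵐ ω ∂μ, (μ[fun ω' => U (grid h n) (bar n ω') ω' | 𝓕 (grid h n)]) ω ≤
      X1v μ 𝓕 U (grid h n) ω + ε

/-- `ρ̄²(nh)` is a family of `ε`-optimizers for `Y²_{nh}` (an essential infimum). -/
def IsOptRho2 (μ : Measure Ω) (𝓕 : Filtration ℝ≥0∞ mΩ) (U : ℝ≥0∞ → ℝ≥0∞ → Ω → ℝ)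
    (ε h : ℝ) (bar : ℕ → Ω → ℝ≥0∞) : Prop :=
  ∀ n : ℕ, bar n ∈ STge 𝓕 (fun _ => grid h n) ∧
    ∀ᵐ ω ∂μ, (μ[fun ω' => U (bar n ω') (grid h n) ω' | 𝓕 (grid h n)]) ω ≤
      Y2v μ 𝓕 U (grid h n) ω + ε

/-- `τ̄²(nh)` is a family of `ε`-optimizers for `X²_{nh}` (an essential supremum). -/
def IsOptTau2 (μ : Measure Ω) (𝓕 : Filtration ℝ≥0∞ mΩ) (U : ℝ≥0∞ → ℝ≥0∞ → Ω → ℝ)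
    (ε h : ℝ) (bar : ℕ → Ω → ℝ≥0∞) : Prop :=
  ∀ n : ℕ, bar n ∈ STge 𝓕 (fun _ => grid h n) ∧
    ∀ᵐ ω ∂μ, X2v μ 𝓕 U (grid h n) ω - ε ≤
      (μ[fun ω' => U (grid h n) (bar n ω') ω' | 𝓕 (grid h n)]) ω

/-- The standing assumptions on the filtered probability space: `ℙ` charges every point of the
(countable) `Ω`, the filtration is right continuous (usual conditions; completeness is automatic
since null sets are empty), and `𝓕 = 𝓕_∞ = ⋃_{t<∞} 𝓕_t`. -/
def UsualSetup (μ : Measure Ω) (𝓕 : Filtration ℝ≥0∞ mΩ) : Prop :=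
  (∀ ω : Ω, μ {ω} ≠ 0) ∧
  (∀ t : ℝ≥0∞, (𝓕 t : MeasurableSpace Ω) = ⨅ s ∈ Ioi t, (𝓕 s : MeasurableSpace Ω)) ∧
  ((𝓕 ∞ : MeasurableSpace Ω) = mΩ) ∧
  ((⨆ t ∈ Iio (∞ : ℝ≥0∞), (𝓕 t : MeasurableSpace Ω)) = mΩ)

/-- The standing assumptions on a payoff `U`: boundedness, `𝓕_{s∨t}`-measurability of `U(s,t)`,
and the uniform-continuity modulus `r` (bounded, nondecreasing, `r(0+) = r(0) = 0`).  Note that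
the modulus condition, being imposed on all of `[0,∞]`, encodes that the values at `∞` are the
corresponding limits. -/
def PayoffAssumption (𝓕 : Filtration ℝ≥0∞ mΩ) (U : ℝ≥0∞ → ℝ≥0∞ → Ω → ℝ)
    (r : ℝ≥0∞ → ℝ) : Prop :=
  (∃ M : ℝ, ∀ s t ω, |U s t ω| ≤ M) ∧
  (∀ s t : ℝ≥0∞, Measurable[𝓕 (s ⊔ t)] (U s t)) ∧
  Monotone r ∧ (∀ x, 0 ≤ r x) ∧ (∃ C : ℝ, ∀ x, r x ≤ C) ∧ r 0 = 0 ∧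
  Tendsto r (𝓝[>] (0 : ℝ≥0∞)) (𝓝 (0 : ℝ)) ∧
  (∀ s t s' t' : ℝ≥0∞, ∀ ω, |U s t ω - U s' t' ω| ≤ r (dd s s' + dd t t'))

/-- The values of `U` at `∞` are the limits of the values at finite times. -/
def LimitsAtInfty (U : ℝ≥0∞ → ℝ≥0∞ → Ω → ℝ) : Prop :=
  (∀ s ω, Tendsto (fun b => U s b ω) (𝓝[<] (∞ : ℝ≥0∞)) (𝓝 (U s ∞ ω))) ∧
  (∀ t ω, Tendsto (fun a => U a t ω) (𝓝[<] (∞ : ℝ≥0∞)) (𝓝 (U ∞ t ω))) ∧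
  (∀ ω, Tendsto (fun p : ℝ≥0∞ × ℝ≥0∞ => U p.1 p.2 ω)
    ((𝓝[<] (∞ : ℝ≥0∞)) ×ˢ (𝓝[<] (∞ : ℝ≥0∞))) (𝓝 (U ∞ ∞ ω)))

/-- `ess inf_{σ ∈ 𝒯_v} E[U(s,σ) | 𝓕_v]` for a stopping time `v`. -/
def XatST (μ : Measure Ω) (𝓕 : Filtration ℝ≥0∞ mΩ) (U : ℝ≥0∞ → ℝ≥0∞ → Ω → ℝ)
    {v : Ω → ℝ≥0∞} (hv : IsStoppingTime 𝓕 (fun ω => (v ω : WithTop ℝ≥0∞))) (s : ℝ≥0∞) (ω : Ω) : ℝ :=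
  ⨅ σ : STge 𝓕 v, (μ[fun ω' => U s (σ.1 ω') ω' | hv.measurableSpace]) ω

/-- `X̃_v(s) = ess inf_{σ ∈ 𝒯_v} E[U(s,σ) | 𝓕_v]` for a deterministic time `v`. -/
def Xat (μ : Measure Ω) (𝓕 : Filtration ℝ≥0∞ mΩ) (U : ℝ≥0∞ → ℝ≥0∞ → Ω → ℝ)
    (v s : ℝ≥0∞) (ω : Ω) : ℝ :=
  ⨅ σ : STge 𝓕 (fun _ => v), (μ[fun ω' => U s (σ.1 ω') ω' | 𝓕 v]) ω

/-- `ρ₀* = μ₁ 1_{μ₁ ≤ μ₂} + ρ²_{μ₂+δ} 1_{μ₁ > μ₂}`. -/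
def rhoStar0 (m1 m2 rsad2 : Ω → ℝ≥0∞) : Ω → ℝ≥0∞ := fun ω =>
  if m1 ω ≤ m2 ω then m1 ω else rsad2 ω

/-- `ρ₁*(t) = ρ_h²(t)` if `t ≥ μ₁ ∧ μ₂ + δ` and `μ₁ > μ₂`, else `ρ_h¹(t)`. -/
def rhoStar1 (m1 m2 : Ω → ℝ≥0∞) (δ : ℝ) (φ1 φ2 : ℝ≥0∞ → Ω → ℝ≥0∞) :
    ℝ≥0∞ → Ω → ℝ≥0∞ := fun t ω =>
  if (m1 ω ⊓ m2 ω) + ENNReal.ofReal δ ≤ t ∧ m2 ω < m1 ω then φ2 t ω else φ1 t ω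

/-- `τ₀* = τ¹_{μ₁+δ} 1_{μ₁ ≤ μ₂} + μ₂ 1_{μ₁ > μ₂}`. -/
def tauStar0 (m1 m2 tsad1 : Ω → ℝ≥0∞) : Ω → ℝ≥0∞ := fun ω =>
  if m1 ω ≤ m2 ω then tsad1 ω else m2 ω

/-- `τ₁*(t) = τ_h¹(t)` if `t ≥ μ₁ ∧ μ₂ + δ` and `μ₁ ≤ μ₂`, else `τ_h²(t)`. -/
def tauStar1 (m1 m2 : Ω → ℝ≥0∞) (δ : ℝ) (ψ1 ψ2 : ℝ≥0∞ → Ω → ℝ≥0∞) :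
    ℝ≥0∞ → Ω → ℝ≥0∞ := fun t ω =>
  if (m1 ω ⊓ m2 ω) + ENNReal.ofReal δ ≤ t ∧ m1 ω ≤ m2 ω then ψ1 t ω else ψ2 t ω


/-- If `μ` charges every point, a.e. statements hold everywhere. -/
lemma ae_all_of_charge {μ : Measure Ω} (hμ : ∀ ω : Ω, μ {ω} ≠ 0) {p : Ω → Prop}
    (h : ∀ᵐ ω ∂μ, p ω) : ∀ ω, p ω := by
  intro ω
  by_contra hp
  exact hμ ω (le_antisymm (le_trans (measure_mono (by intro x hx; simp_all)) h.le) zero_le)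

/-- Restricted version: a.e. statements w.r.t. `μ.restrict s` hold everywhere on `s`. -/
lemma ae_restrict_all_of_charge {μ : Measure Ω} (hμ : ∀ ω : Ω, μ {ω} ≠ 0) {s : Set Ω}
    (hs : MeasurableSet s) {p : Ω → Prop} (h : ∀ᵐ ω ∂(μ.restrict s), p ω) :
    ∀ ω ∈ s, p ω := by
  intro ω hω
  by_contra hp
  have h1 : μ.restrict s {ω} ≠ 0 := by
    rw [Measure.restrict_apply' hs]
    rw [Set.inter_eq_left.mpr (Set.singleton_subset_iff.mpr hω)]; exact hμ ω
  exact h1 (le_antisymm (le_trans (measure_mono (by intro x hx; simp_all)) h.le) zero_le)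

/-- On a countable space, a function constant on the atoms of `m` is `m`-measurable. -/
lemma measurable_of_constant_on_atoms [Countable Ω] {m : MeasurableSpace Ω} {β : Type*}
    [MeasurableSpace β] {g : Ω → β}
    (hg : ∀ ω ω', (∀ s : Set Ω, MeasurableSet[m] s → (ω ∈ s ↔ ω' ∈ s)) → g ω = g ω') :
    Measurable[m] g := by
  classical
  set E : Ω → Ω → Prop := fun ω ω' => ∀ s : Set Ω, MeasurableSet[m] s → (ω ∈ s ↔ ω' ∈ s) with hE
  have hatom : ∀ ω : Ω, MeasurableSet[m] {ω' | E ω ω'} := by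
    intro ω
    have hsep : ∀ ω'' : Ω, ¬ E ω ω'' → ∃ s : Set Ω, MeasurableSet[m] s ∧ ω ∈ s ∧ ω'' ∉ s := by
      intro ω'' h
      simp only [hE, not_forall] at h
      obtain ⟨s, hs, hiff⟩ := h
      by_cases hωs : ω ∈ s
      · exact ⟨s, hs, hωs, fun hc => hiff (iff_of_true hωs hc)⟩
      · exact ⟨sᶜ, hs.compl, hωs, fun hc => hiff (iff_of_false hωs hc)⟩
    choose! S hSm hSω hSω'' using hsep
    have : {ω' | E ω ω'} = ⋂ (ω'' : Ω) (_ : ¬ E ω ω''), S ω'' := by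
      ext ω₁
      simp only [mem_setOf_eq, mem_iInter]
      constructor
      · intro h1 ω'' h2
        exact ((h1 (S ω'') (hSm ω'' h2)).mp (hSω ω'' h2))
      · intro h1
        by_contra hc
        exact hSω'' ω₁ hc (h1 ω₁ hc)
    rw [this]
    exact MeasurableSet.iInter fun ω'' => MeasurableSet.iInter fun h => hSm ω'' h
  intro B _
  have : g ⁻¹' B = ⋃ ω ∈ g ⁻¹' B, {ω' | E ω ω'} := by
    ext ω₁
    simp only [mem_preimage, mem_iUnion, mem_setOf_eq, exists_prop]
    constructor
    · intro h1; exact ⟨ω₁, h1, fun s _ => Iff.rfl⟩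
    · rintro ⟨ω, hω, hEω⟩; rw [← hg ω ω₁ hEω]; exact hω
  rw [this]
  exact MeasurableSet.biUnion (to_countable _) fun ω _ => hatom ω

/-- An `m`-measurable function (into a space with measurable singletons) is constant on
`m`-atoms. -/
lemma eq_of_measurable_of_atoms {m : MeasurableSpace Ω} {β : Type*} [MeasurableSpace β]
    [MeasurableSingletonClass β] {g : Ω → β} (hg : Measurable[m] g) {ω ω' : Ω}
    (h : ∀ s : Set Ω, MeasurableSet[m] s → (ω ∈ s ↔ ω' ∈ s)) : g ω = g ω' :=
  (((h _ (hg (measurableSet_singleton (g ω)))).mp rfl)).symm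

/-- Bounded measurable functions are integrable. -/
lemma integrable_of_bdd {μ : Measure Ω} [IsFiniteMeasure μ] {f : Ω → ℝ} {M : ℝ}
    (hf : Measurable f) (hM : ∀ ω, |f ω| ≤ M) : Integrable f μ :=
  ⟨hf.aestronglyMeasurable, HasFiniteIntegral.of_bounded (C := M) (ae_of_all _ hM)⟩

/-- Pointwise bound on the conditional expectation of a bounded function. -/
lemma condexp_bdd {μ : Measure Ω} [IsProbabilityMeasure μ] (hμ : ∀ ω : Ω, μ {ω} ≠ 0)
    {m : MeasurableSpace Ω} (hm : m ≤ mΩ) {f : Ω → ℝ} {M : ℝ}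
    (hf : Measurable[mΩ] f) (hM : ∀ ω, |f ω| ≤ M) : ∀ ω, |(μ[f|m]) ω| ≤ M := by
  have hint : Integrable f μ := integrable_of_bdd (mΩ := mΩ) hf hM
  have h1 : μ[f|m] ≤ᵐ[μ] μ[(fun _ => M)|m] :=
    condExp_mono (m₀ := mΩ) hint (integrable_const M) (ae_of_all _ fun ω => (abs_le.mp (hM ω)).2)
  have h2 : μ[(fun _ => (-M : ℝ))|m] ≤ᵐ[μ] μ[f|m] :=
    condExp_mono (m₀ := mΩ) (integrable_const _) hint (ae_of_all _ fun ω => (abs_le.mp (hM ω)).1)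
  have hc1 : μ[(fun _ => (M : ℝ))|m] = fun _ => (M : ℝ) := condExp_const (m₀ := mΩ) hm _
  have hc2 : μ[(fun _ => (-M : ℝ))|m] = fun _ => (-M : ℝ) := condExp_const (m₀ := mΩ) hm _
  have key : ∀ᵐ ω ∂μ, |(μ[f|m]) ω| ≤ M := by
    filter_upwards [h1, h2] with ω hω1 hω2
    have e1 := congrFun hc1 ω
    have e2 := congrFun hc2 ω
    exact abs_le.mpr ⟨e2 ▸ hω2, hω1.trans (le_of_eq e1)⟩
  exact ae_all_of_charge (mΩ := mΩ) hμ key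

/-- Composition along a measurable map on a countable space. -/
lemma measurable_eval [Countable Ω] {γ β : Type*} [MeasurableSpace γ]
    [MeasurableSingletonClass γ] [MeasurableSpace β] {p : Ω → γ} (hp : Measurable p)
    {F : γ → Ω → β} (hF : ∀ s, Measurable (F s)) : Measurable (fun ω => F (p ω) ω) := by
  intro B hB
  have : (fun ω => F (p ω) ω) ⁻¹' B = ⋃ s ∈ Set.range p, {ω | p ω = s} ∩ (F s ⁻¹' B) := by
    ext ω
    simp only [mem_preimage, mem_iUnion, mem_inter_iff, mem_setOf_eq, Set.mem_range, exists_prop]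
    constructor
    · intro h1; exact ⟨p ω, ⟨ω, rfl⟩, rfl, h1⟩
    · rintro ⟨s, _, rfl, h2⟩; exact h2
  rw [this]
  exact MeasurableSet.biUnion (Set.countable_range p)
    (fun s _ => (hp (measurableSet_singleton s)).inter (hF s hB))


/-- last display of Remark 3.4: in the zero-sum sub-game at a stopping time
`σ`, for every stopping strategy `ρ ∈ 𝔗_σ`, a.s.
`E[U(ρ[τ_σ^ε], τ_σ^ε[ρ]) | 𝓕_σ] ≤ v_σ + 4ε`, where `τ_σ^ε = (τ_σ^ε, τ_h)`. -/
theorem subgame_upper_bound [Countable Ω] (μ : Measure Ω) [IsProbabilityMeasure μ]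
    (𝓕 : Filtration ℝ≥0∞ mΩ) (hsetup : UsualSetup μ 𝓕)
    (U : ℝ≥0∞ → ℝ≥0∞ → Ω → ℝ) (r : ℝ≥0∞ → ℝ) (hU : PayoffAssumption 𝓕 U r)
    (ε h : ℝ) (hε : 0 < ε) (hh : 0 < h)
    (σ : Ω → ℝ≥0∞) (hσ : IsStoppingTime 𝓕 (fun ω => (σ ω : WithTop ℝ≥0∞)))
    (τbar : ℕ → Ω → ℝ≥0∞) (hτopt : IsOptTau1 μ 𝓕 U ε h τbar)
    (happroxX : ∀ (ρ₀ : Ω → ℝ≥0∞) (hρ₀ : IsStoppingTime 𝓕 (fun ω => (ρ₀ ω : WithTop ℝ≥0∞))),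
      ∀ᵐ ω ∂μ,
        (μ[fun ω' => U (ρ₀ ω') (evalAt (gridStrat h τbar) ρ₀ ω') ω' |
          hρ₀.measurableSpace]) ω - 2*ε < X1v μ 𝓕 U (ρ₀ ω) ω)
    (ρσε τσε : Ω → ℝ≥0∞) (hρσε : ρσε ∈ STge 𝓕 σ) (hτσε : τσε ∈ STge 𝓕 σ)
    (hsaddle : ∀ ρ₀ τ₀ : Ω → ℝ≥0∞, ρ₀ ∈ STge 𝓕 σ → τ₀ ∈ STge 𝓕 σ →
      ∀ᵐ ω ∂μ,
        condDynkin μ hσ.measurableSpace (X1v μ 𝓕 U) (Y1v μ 𝓕 U) (Zv U) ρ₀ τσε ω - ε ≤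
          condDynkin μ hσ.measurableSpace (X1v μ 𝓕 U) (Y1v μ 𝓕 U) (Zv U) ρσε τσε ω ∧
        condDynkin μ hσ.measurableSpace (X1v μ 𝓕 U) (Y1v μ 𝓕 U) (Zv U) ρσε τσε ω ≤
          condDynkin μ hσ.measurableSpace (X1v μ 𝓕 U) (Y1v μ 𝓕 U) (Zv U) ρσε τ₀ ω + ε) :
    ∀ ρ : (Ω → ℝ≥0∞) × (ℝ≥0∞ → Ω → ℝ≥0∞), IsStrategyGe 𝓕 σ ρ →
      ∀ᵐ ω ∂μ,
        condPayoff μ hσ.measurableSpace U ρ (τσε, gridStrat h τbar) ω ≤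
          (⨆ ρ₀ : STge 𝓕 σ, ⨅ τ₀ : STge 𝓕 σ,
            condDynkin μ hσ.measurableSpace (X1v μ 𝓕 U) (Y1v μ 𝓕 U) (Zv U)
              ρ₀.1 τ₀.1 ω) + 4*ε := by
  classical
  intro ρ hρmem
  obtain ⟨M, hM⟩ := hU.1
  have hcharge : ∀ ω : Ω, μ {ω} ≠ 0 := hsetup.1
  have hρ₀st : IsStoppingTime 𝓕 (fun ω => (ρ.1 ω : WithTop ℝ≥0∞)) := hρmem.1.1
  have hρ₁TT : IsTT 𝓕 ρ.2 := hρmem.1.2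
  have hρge : ∀ ω, σ ω ≤ ρ.1 ω := hρmem.2
  have hτst : IsStoppingTime 𝓕 (fun ω => (τσε ω : WithTop ℝ≥0∞)) := hτσε.1
  have hτge : ∀ ω, σ ω ≤ τσε ω := hτσε.2
  -- basic measurability facts
  have hmeasST : ∀ {τ' : Ω → ℝ≥0∞}, IsStoppingTime 𝓕 (fun ω => (τ' ω : WithTop ℝ≥0∞)) → Measurable[mΩ] τ' := by
    intro τ' hτ'
    exact measurable_of_Iic fun x => by
      have := 𝓕.le x _ (hτ' x)
      simpa only [Set.preimage, Set.mem_Iic, WithTop.coe_le_coe] using this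
  have hUm : ∀ s t : ℝ≥0∞, Measurable[mΩ] (U s t) := fun s t =>
    (hU.2.1 s t).mono (𝓕.le _) le_rfl
  have hmeasU2 : ∀ {p q : Ω → ℝ≥0∞}, Measurable[mΩ] p → Measurable[mΩ] q →
      Measurable[mΩ] (fun ω => U (p ω) (q ω) ω) := by
    intro p q hp hq
    exact measurable_eval (p := fun ω => (p ω, q ω)) (hp.prodMk hq)
      (F := fun st ω => U st.1 st.2 ω) (fun st => hUm st.1 st.2)
  have hΩne : Nonempty Ω := by
    by_contra hne
    have h0 : μ Set.univ = 0 := by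
      rw [Set.univ_eq_empty_iff.mpr (not_nonempty_iff.mp hne)]; simp
    rw [measure_univ] at h0; exact one_ne_zero h0
  have hM0 : 0 ≤ M := le_trans (abs_nonneg _) (hM ∞ ∞ (Classical.arbitrary Ω))
  have hSTne : ∀ v : Ω → ℝ≥0∞, Nonempty (STge 𝓕 v) := fun v =>
    ⟨⟨fun _ => ∞, isStoppingTime_const 𝓕 ∞, fun ω => le_top⟩⟩
  have hcondBdd : ∀ {m' : MeasurableSpace Ω}, m' ≤ mΩ → ∀ {g : Ω → ℝ},
      Measurable[mΩ] g → (∀ ω, |g ω| ≤ M) → ∀ ω, |(μ[g|m']) ω| ≤ M := by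
    intro m' hm' g hg hgM
    exact condexp_bdd (mΩ := mΩ) hcharge hm' hg hgM
  -- measurability and bounds for X and Y
  have hXmeas : ∀ t : ℝ≥0∞, Measurable[mΩ] (X1v μ 𝓕 U t) := by
    intro t
    refine (measurable_of_constant_on_atoms (m := 𝓕 t) ?_).mono (𝓕.le t) le_rfl
    intro ω ω' hatoms
    exact iInf_congr fun σ' =>
      eq_of_measurable_of_atoms (stronglyMeasurable_condExp.measurable) hatoms
  have hYmeas : ∀ t : ℝ≥0∞, Measurable[mΩ] (Y1v μ 𝓕 U t) := by
    intro t
    refine (measurable_of_constant_on_atoms (m := 𝓕 t) ?_).mono (𝓕.le t) le_rfl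
    intro ω ω' hatoms
    exact iSup_congr fun σ' =>
      eq_of_measurable_of_atoms (stronglyMeasurable_condExp.measurable) hatoms
  have hXbdd : ∀ t ω, |X1v μ 𝓕 U t ω| ≤ M := by
    intro t ω
    have hbd : ∀ σ' : STge 𝓕 (fun _ => t),
        |(μ[fun ω' => U t (σ'.1 ω') ω'|𝓕 t]) ω| ≤ M := fun σ' =>
      hcondBdd (𝓕.le t) (hmeasU2 measurable_const (hmeasST σ'.2.1)) (fun ω' => hM _ _ _) ω
    rw [abs_le]
    constructor
    · exact le_ciInf fun σ' => (abs_le.mp (hbd σ')).1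
    · obtain ⟨σ'⟩ := hSTne (fun _ => t)
      refine le_trans (ciInf_le ⟨-M, ?_⟩ σ') (abs_le.mp (hbd σ')).2
      rintro x ⟨σ'', rfl⟩; exact (abs_le.mp (hbd σ'')).1
  have hYbdd : ∀ t ω, |Y1v μ 𝓕 U t ω| ≤ M := by
    intro t ω
    have hbd : ∀ σ' : STge 𝓕 (fun _ => t),
        |(μ[fun ω' => U (σ'.1 ω') t ω'|𝓕 t]) ω| ≤ M := fun σ' =>
      hcondBdd (𝓕.le t) (hmeasU2 (hmeasST σ'.2.1) measurable_const) (fun ω' => hM _ _ _) ω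
    rw [abs_le]
    constructor
    · obtain ⟨σ'⟩ := hSTne (fun _ => t)
      have hbdda : BddAbove (Set.range fun σ'' : STge 𝓕 (fun _ => t) =>
          (μ[fun ω' => U (σ''.1 ω') t ω'|𝓕 t]) ω) := by
        refine ⟨M, ?_⟩; rintro x ⟨σ'', rfl⟩; exact (abs_le.mp (hbd σ'')).2
      exact le_trans (abs_le.mp (hbd σ')).1 (le_ciSup hbdda σ')
    · exact ciSup_le fun σ' => (abs_le.mp (hbd σ')).2
  -- measurability and bounds for the Dynkin kernel
  have hkermeas : ∀ {ρ' τ' : Ω → ℝ≥0∞}, Measurable[mΩ] ρ' → Measurable[mΩ] τ' →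
      Measurable[mΩ] (dynkinKernel (X1v μ 𝓕 U) (Y1v μ 𝓕 U) (Zv U) ρ' τ') := by
    intro ρ' τ' hρ' hτ'
    refine measurable_eval (p := fun ω => (ρ' ω, τ' ω)) (hρ'.prodMk hτ')
      (F := fun st ω => if st.1 < st.2 then X1v μ 𝓕 U st.1 ω
        else if st.2 < st.1 then Y1v μ 𝓕 U st.2 ω else U st.1 st.1 ω) ?_
    intro st
    by_cases h1 : st.1 < st.2
    · simpa [h1] using hXmeas st.1
    · by_cases h2 : st.2 < st.1
      · simpa [h1, h2] using hYmeas st.2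
      · simpa [h1, h2] using hUm st.1 st.1
  have hkerbdd : ∀ {ρ' τ' : Ω → ℝ≥0∞} (ω : Ω),
      |dynkinKernel (X1v μ 𝓕 U) (Y1v μ 𝓕 U) (Zv U) ρ' τ' ω| ≤ M := by
    intro ρ' τ' ω
    unfold dynkinKernel
    split_ifs
    · exact hXbdd _ ω
    · exact hYbdd _ ω
    · exact hM _ _ _
  have hmle : hσ.measurableSpace ≤ mΩ := hσ.measurableSpace_le
  have hcdBdd : ∀ {ρ' τ' : Ω → ℝ≥0∞}, IsStoppingTime 𝓕 (fun ω => (ρ' ω : WithTop ℝ≥0∞)) → IsStoppingTime 𝓕 (fun ω => (τ' ω : WithTop ℝ≥0∞)) → ∀ ω,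
      |condDynkin μ hσ.measurableSpace (X1v μ 𝓕 U) (Y1v μ 𝓕 U) (Zv U) ρ' τ' ω| ≤ M := by
    intro ρ' τ' hρ' hτ' ω
    exact hcondBdd hmle (hkermeas (hmeasST hρ') (hmeasST hτ')) (fun ω' => hkerbdd ω') ω
  -- the three events
  set A : Set Ω := {ω | ρ.1 ω < τσε ω} with hAdef
  set B : Set Ω := {ω | τσε ω < ρ.1 ω} with hBdef
  set C : Set Ω := {ω | ρ.1 ω = τσε ω} with hCdef
  have hAmΩ : MeasurableSet[mΩ] A := measurableSet_lt (hmeasST hρ₀st) (hmeasST hτst)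
  have hBmΩ : MeasurableSet[mΩ] B := measurableSet_lt (hmeasST hτst) (hmeasST hρ₀st)
  have hCmΩ : MeasurableSet[mΩ] C := by
    have hCeq : C = (A ∪ B)ᶜ := by
      ext ω
      simp only [hCdef, hAdef, hBdef, Set.mem_compl_iff, Set.mem_union, Set.mem_setOf_eq,
        not_or, not_lt]
      exact ⟨fun h' => ⟨h'.ge, h'.le⟩, fun h' => le_antisymm h'.2 h'.1⟩
    rw [hCeq]; exact (hAmΩ.union hBmΩ).compl
  -- the integrands
  set fA : Ω → ℝ := fun ω' => U (ρ.1 ω') (evalAt (gridStrat h τbar) ρ.1 ω') ω' with hfAdef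
  set fB : Ω → ℝ := fun ω' => U (ρ.2 (τσε ω') ω') (τσε ω') ω' with hfBdef
  set gA : Ω → ℝ := fun ω' => X1v μ 𝓕 U (ρ.1 ω') ω' with hgAdef
  set gB : Ω → ℝ := fun ω' => Y1v μ 𝓕 U (τσε ω') ω' with hgBdef
  set gC : Ω → ℝ := fun ω' => U (ρ.1 ω') (ρ.1 ω') ω' with hgCdef
  set f : Ω → ℝ := fun ω => U (play ρ (τσε, gridStrat h τbar) ω)
    (play (τσε, gridStrat h τbar) ρ ω) ω with hfdef
  have hτgridmeas : ∀ t, Measurable[mΩ] (gridStrat h τbar t) := by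
    intro t
    have hge : gridStrat h τbar t = fun ω => if t = ∞ then ∞ else τbar (gridIdx h t) ω := rfl
    by_cases ht : t = ∞
    · rw [hge]; simp only [if_pos ht]; exact measurable_const
    · rw [hge]; simp only [if_neg ht]; exact hmeasST (hτopt (gridIdx h t)).1.1
  have hevalmeas : Measurable[mΩ] (evalAt (gridStrat h τbar) ρ.1) :=
    measurable_eval (hmeasST hρ₀st) hτgridmeas
  have hfAmeas : Measurable[mΩ] fA := hmeasU2 (hmeasST hρ₀st) hevalmeas
  have hfBmeas : Measurable[mΩ] fB := by
    refine measurable_eval (hmeasST hτst) (F := fun t ω' => U (ρ.2 t ω') t ω') ?_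
    intro t
    exact hmeasU2 (hρ₁TT.1.comp measurable_prodMk_left) measurable_const
  have hgAmeas : Measurable[mΩ] gA := measurable_eval (hmeasST hρ₀st) (fun s => hXmeas s)
  have hgBmeas : Measurable[mΩ] gB := measurable_eval (hmeasST hτst) (fun t => hYmeas t)
  have hgCmeas : Measurable[mΩ] gC := hmeasU2 (hmeasST hρ₀st) (hmeasST hρ₀st)
  have hfAbdd : ∀ ω, |fA ω| ≤ M := fun ω => hM _ _ _
  have hfBbdd : ∀ ω, |fB ω| ≤ M := fun ω => hM _ _ _
  have hgCbdd : ∀ ω, |gC ω| ≤ M := fun ω => hM _ _ _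
  have hgAbdd : ∀ ω, |gA ω| ≤ M := fun ω => hXbdd _ ω
  have hgBbdd : ∀ ω, |gB ω| ≤ M := fun ω => hYbdd _ ω
  have hindbdd : ∀ {s : Set Ω} {g : Ω → ℝ} {K : ℝ}, 0 ≤ K → (∀ ω, |g ω| ≤ K) →
      ∀ ω, |s.indicator g ω| ≤ K := by
    intro s g K hK hg ω
    by_cases hω : ω ∈ s
    · rw [Set.indicator_of_mem hω]; exact hg ω
    · rw [Set.indicator_of_notMem hω]; simpa using hK
  have hintfA : Integrable (A.indicator fA) μ :=
    integrable_of_bdd (mΩ := mΩ) (hfAmeas.indicator hAmΩ) (hindbdd hM0 hfAbdd)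
  have hintfB : Integrable (B.indicator fB) μ :=
    integrable_of_bdd (mΩ := mΩ) (hfBmeas.indicator hBmΩ) (hindbdd hM0 hfBbdd)
  have hintgC : Integrable (C.indicator gC) μ :=
    integrable_of_bdd (mΩ := mΩ) (hgCmeas.indicator hCmΩ) (hindbdd hM0 hgCbdd)
  have hintfA' : Integrable fA μ := integrable_of_bdd (mΩ := mΩ) hfAmeas hfAbdd
  have hintfB' : Integrable fB μ := integrable_of_bdd (mΩ := mΩ) hfBmeas hfBbdd
  -- decomposition of f
  have hdecomp : f = A.indicator fA + B.indicator fB + C.indicator gC := by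
    funext ω
    rcases lt_trichotomy (ρ.1 ω) (τσε ω) with hlt | heq | hgt
    · have hA : ω ∈ A := hlt
      have hB : ω ∉ B := by simp only [hBdef, Set.mem_setOf_eq, not_lt]; exact hlt.le
      have hC : ω ∉ C := by simp only [hCdef, Set.mem_setOf_eq]; exact hlt.ne
      simp only [Pi.add_apply, Set.indicator_of_mem hA, Set.indicator_of_notMem hB,
        Set.indicator_of_notMem hC, add_zero]
      show U (play ρ (τσε, gridStrat h τbar) ω) (play (τσε, gridStrat h τbar) ρ ω) ω = fA ω
      rw [hfAdef]
      unfold play evalAt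
      dsimp only
      rw [if_pos hlt.le, if_neg (not_le.mpr hlt)]
    · have hA : ω ∉ A := by simp only [hAdef, Set.mem_setOf_eq, not_lt]; exact heq.ge
      have hB : ω ∉ B := by simp only [hBdef, Set.mem_setOf_eq, not_lt]; exact heq.le
      have hC : ω ∈ C := heq
      simp only [Pi.add_apply, Set.indicator_of_mem hC, Set.indicator_of_notMem hB,
        Set.indicator_of_notMem hA, zero_add, add_zero]
      show U (play ρ (τσε, gridStrat h τbar) ω) (play (τσε, gridStrat h τbar) ρ ω) ω = gC ω
      rw [hgCdef]
      unfold play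
      dsimp only
      rw [if_pos heq.le, if_pos heq.ge, heq]
    · have hA : ω ∉ A := by simp only [hAdef, Set.mem_setOf_eq, not_lt]; exact hgt.le
      have hB : ω ∈ B := hgt
      have hC : ω ∉ C := by simp only [hCdef, Set.mem_setOf_eq]; exact hgt.ne'
      simp only [Pi.add_apply, Set.indicator_of_mem hB, Set.indicator_of_notMem hA,
        Set.indicator_of_notMem hC, zero_add, add_zero]
      show U (play ρ (τσε, gridStrat h τbar) ω) (play (τσε, gridStrat h τbar) ρ ω) ω = fB ω
      rw [hfBdef]
      unfold play
      dsimp only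
      rw [if_neg (not_le.mpr hgt), if_pos hgt.le]
  -- decomposition of the Dynkin kernel
  have hgdecomp : dynkinKernel (X1v μ 𝓕 U) (Y1v μ 𝓕 U) (Zv U) ρ.1 τσε
      = A.indicator gA + B.indicator gB + C.indicator gC := by
    funext ω
    show (if ρ.1 ω < τσε ω then X1v μ 𝓕 U (ρ.1 ω) ω else if τσε ω < ρ.1 ω
      then Y1v μ 𝓕 U (τσε ω) ω else Zv U (ρ.1 ω) ω) = _
    rcases lt_trichotomy (ρ.1 ω) (τσε ω) with hlt | heq | hgt
    · have hA : ω ∈ A := hlt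
      have hB : ω ∉ B := by simp only [hBdef, Set.mem_setOf_eq, not_lt]; exact hlt.le
      have hC : ω ∉ C := by simp only [hCdef, Set.mem_setOf_eq]; exact hlt.ne
      simp only [Pi.add_apply, Set.indicator_of_mem hA, Set.indicator_of_notMem hB,
        Set.indicator_of_notMem hC, add_zero, if_pos hlt]
      try rfl
    · have hA : ω ∉ A := by simp only [hAdef, Set.mem_setOf_eq, not_lt]; exact heq.ge
      have hB : ω ∉ B := by simp only [hBdef, Set.mem_setOf_eq, not_lt]; exact heq.le
      have hC : ω ∈ C := heq
      simp only [Pi.add_apply, Set.indicator_of_mem hC, Set.indicator_of_notMem hB,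
        Set.indicator_of_notMem hA, zero_add, add_zero]
      rw [if_neg (by rw [heq]; exact lt_irrefl _), if_neg (by rw [heq]; exact lt_irrefl _)]
      try rfl
    · have hA : ω ∉ A := by simp only [hAdef, Set.mem_setOf_eq, not_lt]; exact hgt.le
      have hB : ω ∈ B := hgt
      have hC : ω ∉ C := by simp only [hCdef, Set.mem_setOf_eq]; exact hgt.ne'
      simp only [Pi.add_apply, Set.indicator_of_mem hB, Set.indicator_of_notMem hA,
        Set.indicator_of_notMem hC, zero_add, add_zero]
      rw [if_neg (not_lt.mpr hgt.le), if_pos hgt]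
      try rfl
  -- σ-algebra comparisons
  have hmρle : hρ₀st.measurableSpace ≤ mΩ :=
    hρ₀st.measurableSpace_le
  have hmτle : hτst.measurableSpace ≤ mΩ :=
    hτst.measurableSpace_le
  have hmmρ : hσ.measurableSpace ≤ hρ₀st.measurableSpace :=
    IsStoppingTime.measurableSpace_mono hσ hρ₀st (fun ω => WithTop.coe_le_coe.mpr (hρge ω))
  have hmmτ : hσ.measurableSpace ≤ hτst.measurableSpace :=
    IsStoppingTime.measurableSpace_mono hσ hτst (fun ω => WithTop.coe_le_coe.mpr (hτge ω))
  have hAmρ : MeasurableSet[hρ₀st.measurableSpace] A := by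
    have hAc : A = {ω | τσε ω ≤ ρ.1 ω}ᶜ := by
      ext ω; simp only [hAdef, Set.mem_setOf_eq, Set.mem_compl_iff, not_le]
    rw [hAc]
    simpa only [WithTop.coe_le_coe] using (IsStoppingTime.measurableSet_stopping_time_le hτst hρ₀st).compl
  have hBmτ : MeasurableSet[hτst.measurableSpace] B := by
    have hBc : B = {ω | ρ.1 ω ≤ τσε ω}ᶜ := by
      ext ω; simp only [hBdef, Set.mem_setOf_eq, Set.mem_compl_iff, not_le]
    rw [hBc]
    simpa only [WithTop.coe_le_coe] using (IsStoppingTime.measurableSet_stopping_time_le hρ₀st hτst).compl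
  -- the approximation hypothesis, pointwise
  have happrox := ae_all_of_charge (mΩ := mΩ) hcharge (happroxX ρ.1 hρ₀st)
  rw [← hfAdef] at happrox
  -- Step (A)
  have hintcfA : Integrable (A.indicator (μ[fA|hρ₀st.measurableSpace])) μ := by
    refine integrable_of_bdd (mΩ := mΩ)
      (((stronglyMeasurable_condExp.measurable).mono hmρle le_rfl).indicator hAmΩ)
      (hindbdd hM0 ?_)
    exact fun ω => hcondBdd hmρle hfAmeas hfAbdd ω
  have hgA2bdd : ∀ ω, |gA ω + 2*ε| ≤ M + 2*ε := by
    intro ω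
    calc |gA ω + 2*ε| ≤ |gA ω| + |2*ε| := abs_add_le _ _
    _ ≤ M + 2*ε := by
        have := hgAbdd ω
        have h2 : |2*ε| = 2*ε := abs_of_nonneg (by linarith)
        linarith
  have hintgA2 : Integrable (A.indicator (fun ω' => gA ω' + 2*ε)) μ :=
    integrable_of_bdd (mΩ := mΩ) ((hgAmeas.add measurable_const).indicator hAmΩ)
      (hindbdd (by linarith) hgA2bdd)
  have hE2A : ∀ᵐ ω ∂μ, (μ[A.indicator fA|hσ.measurableSpace]) ω ≤
      (μ[A.indicator (fun ω' => gA ω' + 2*ε)|hσ.measurableSpace]) ω := by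
    have t1 : μ[A.indicator fA|hσ.measurableSpace]
        =ᵐ[μ] μ[μ[A.indicator fA|hρ₀st.measurableSpace]|hσ.measurableSpace] :=
      (condExp_condExp_of_le hmmρ hmρle).symm
    have t2 : μ[A.indicator fA|hρ₀st.measurableSpace]
        =ᵐ[μ] A.indicator (μ[fA|hρ₀st.measurableSpace]) :=
      condExp_indicator hintfA' hAmρ
    have t3 : ∀ ω, A.indicator (μ[fA|hρ₀st.measurableSpace]) ω ≤
        A.indicator (fun ω' => gA ω' + 2*ε) ω := by
      intro ω
      by_cases hω : ω ∈ A
      · rw [Set.indicator_of_mem hω, Set.indicator_of_mem hω]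
        have h1 := happrox ω
        have h2 : gA ω = X1v μ 𝓕 U (ρ.1 ω) ω := by rw [hgAdef]
        linarith
      · rw [Set.indicator_of_notMem hω, Set.indicator_of_notMem hω]
    filter_upwards [t1, condExp_congr_ae (m := hσ.measurableSpace) t2,
      condExp_mono (m := hσ.measurableSpace) (m₀ := mΩ) hintcfA hintgA2 (ae_of_all _ t3)]
      with ω e1 e2 e3
    rw [e1, e2]
    exact e3
  -- Step (B) : the locality argument
  have hKB : ∀ ω₀ ∈ B, (μ[fB|hτst.measurableSpace]) ω₀ ≤ gB ω₀ := by
    intro ω₀ hω₀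
    have hω₀lt : τσε ω₀ < ρ.1 ω₀ := hω₀
    set t := τσε ω₀ with htdef
    have htinf : t ≠ ∞ := (lt_of_lt_of_le hω₀lt le_top).ne
    set s_t : Set Ω := {x | τσε x = t} with hstdef
    have hstmΩ : MeasurableSet[mΩ] s_t := (hmeasST hτst) (measurableSet_singleton t)
    have hst𝓕t : MeasurableSet[𝓕 t] s_t := by
      simpa only [WithTop.coe_eq_coe] using
        hτst.measurableSet_eq_of_countable_range (Set.countable_range _) t
    have L1 : μ[fB|hτst.measurableSpace] =ᵐ[μ.restrict s_t] μ[fB|𝓕 t] := by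
      have := condExp_stopping_time_ae_eq_restrict_eq_of_countable_range (μ := μ) (f := fB) hτst
        (Set.countable_range _) t
      simpa only [WithTop.coe_eq_coe] using this
    have L1' := ae_restrict_all_of_charge (mΩ := mΩ) hcharge hstmΩ L1
    set ft : Ω → ℝ := fun ω' => U (ρ.2 t ω') t ω' with hftdef
    have hftmeas : Measurable[mΩ] ft :=
      hmeasU2 (hρ₁TT.1.comp measurable_prodMk_left) measurable_const
    have hintft : Integrable ft μ :=
      integrable_of_bdd (mΩ := mΩ) hftmeas (fun ω => hM _ _ _)
    have hind : s_t.indicator fB = s_t.indicator ft := by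
      refine Set.indicator_congr ?_
      intro x hx
      have hx' : τσε x = t := hx
      rw [hfBdef, hftdef]
      simp only
      rw [hx']
    have c1 : μ[s_t.indicator fB|𝓕 t] =ᵐ[μ] s_t.indicator (μ[fB|𝓕 t]) :=
      condExp_indicator hintfB' hst𝓕t
    have c2 : μ[s_t.indicator ft|𝓕 t] =ᵐ[μ] s_t.indicator (μ[ft|𝓕 t]) :=
      condExp_indicator hintft hst𝓕t
    have c3 : s_t.indicator (μ[fB|𝓕 t]) =ᵐ[μ] s_t.indicator (μ[ft|𝓕 t]) := by
      refine c1.symm.trans ?_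
      rw [hind]
      exact c2
    have c3' := ae_all_of_charge (mΩ := mΩ) hcharge c3
    have hω₀st : ω₀ ∈ s_t := htdef.symm
    have e1 : (μ[fB|𝓕 t]) ω₀ = (μ[ft|𝓕 t]) ω₀ := by
      have hmem := c3' ω₀
      rwa [Set.indicator_of_mem hω₀st, Set.indicator_of_mem hω₀st] at hmem
    have hσ'mem : ρ.2 t ∈ STge 𝓕 (fun _ => t) := by
      obtain ⟨hst, hgt⟩ := hρ₁TT.2 t htinf
      exact ⟨hst, fun ω => (hgt ω).le⟩
    have hbd : ∀ σ'' : STge 𝓕 (fun _ => t),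
        |(μ[fun ω' => U (σ''.1 ω') t ω'|𝓕 t]) ω₀| ≤ M := fun σ'' =>
      hcondBdd (𝓕.le t) (hmeasU2 (hmeasST σ''.2.1) measurable_const) (fun ω' => hM _ _ _) ω₀
    have hbdda : BddAbove (Set.range fun σ'' : STge 𝓕 (fun _ => t) =>
        (μ[fun ω' => U (σ''.1 ω') t ω'|𝓕 t]) ω₀) := by
      refine ⟨M, ?_⟩; rintro x ⟨σ'', rfl⟩; exact (abs_le.mp (hbd σ'')).2
    have L3 : (μ[ft|𝓕 t]) ω₀ ≤ Y1v μ 𝓕 U t ω₀ := le_ciSup hbdda ⟨ρ.2 t, hσ'mem⟩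
    calc (μ[fB|hτst.measurableSpace]) ω₀ = (μ[fB|𝓕 t]) ω₀ := L1' ω₀ hω₀st
      _ = (μ[ft|𝓕 t]) ω₀ := e1
      _ ≤ Y1v μ 𝓕 U t ω₀ := L3
      _ = gB ω₀ := by rw [hgBdef]
  have hintcfB : Integrable (B.indicator (μ[fB|hτst.measurableSpace])) μ := by
    refine integrable_of_bdd (mΩ := mΩ)
      (((stronglyMeasurable_condExp.measurable).mono hmτle le_rfl).indicator hBmΩ)
      (hindbdd hM0 ?_)
    exact fun ω => hcondBdd hmτle hfBmeas hfBbdd ω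
  have hintgB2 : Integrable (B.indicator gB) μ :=
    integrable_of_bdd (mΩ := mΩ) (hgBmeas.indicator hBmΩ) (hindbdd hM0 hgBbdd)
  have hE2B : ∀ᵐ ω ∂μ, (μ[B.indicator fB|hσ.measurableSpace]) ω ≤
      (μ[B.indicator gB|hσ.measurableSpace]) ω := by
    have t1 : μ[B.indicator fB|hσ.measurableSpace]
        =ᵐ[μ] μ[μ[B.indicator fB|hτst.measurableSpace]|hσ.measurableSpace] :=
      (condExp_condExp_of_le hmmτ hmτle).symm
    have t2 : μ[B.indicator fB|hτst.measurableSpace]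
        =ᵐ[μ] B.indicator (μ[fB|hτst.measurableSpace]) :=
      condExp_indicator hintfB' hBmτ
    have t3 : ∀ ω, B.indicator (μ[fB|hτst.measurableSpace]) ω ≤ B.indicator gB ω := by
      intro ω
      by_cases hω : ω ∈ B
      · rw [Set.indicator_of_mem hω, Set.indicator_of_mem hω]
        exact hKB ω hω
      · rw [Set.indicator_of_notMem hω, Set.indicator_of_notMem hω]
    filter_upwards [t1, condExp_congr_ae (m := hσ.measurableSpace) t2,
      condExp_mono (m := hσ.measurableSpace) (m₀ := mΩ) hintcfB hintgB2 (ae_of_all _ t3)]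
      with ω e1 e2 e3
    rw [e1, e2]
    exact e3
  -- assembling the conditional expectations
  have hE1 : μ[f|hσ.measurableSpace] =ᵐ[μ] μ[A.indicator fA|hσ.measurableSpace]
      + μ[B.indicator fB|hσ.measurableSpace] + μ[C.indicator gC|hσ.measurableSpace] := by
    have e0 : μ[f|hσ.measurableSpace]
        = μ[A.indicator fA + B.indicator fB + C.indicator gC|hσ.measurableSpace] := by
      rw [hdecomp]
    rw [e0]
    refine (condExp_add (m := hσ.measurableSpace) (hintfA.add hintfB) hintgC).trans ?_
    exact (condExp_add (m := hσ.measurableSpace) hintfA hintfB).add EventuallyEq.rfl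
  have hsplitA : A.indicator (fun ω' => gA ω' + 2*ε)
      = A.indicator gA + A.indicator (fun _ => 2*ε) := by
    funext ω
    by_cases hω : ω ∈ A
    · simp [Set.indicator_of_mem hω]
    · simp [Set.indicator_of_notMem hω]
  have hE3eq : A.indicator (fun ω' => gA ω' + 2*ε) + B.indicator gB + C.indicator gC
      = dynkinKernel (X1v μ 𝓕 U) (Y1v μ 𝓕 U) (Zv U) ρ.1 τσε
        + A.indicator (fun _ => 2*ε) := by
    rw [hgdecomp, hsplitA]
    abel
  have hintker : Integrable (dynkinKernel (X1v μ 𝓕 U) (Y1v μ 𝓕 U) (Zv U) ρ.1 τσε) μ :=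
    integrable_of_bdd (mΩ := mΩ) (hkermeas (hmeasST hρ₀st) (hmeasST hτst))
      (fun ω => hkerbdd ω)
  have hint2ε : Integrable (A.indicator (fun _ : Ω => 2*ε)) μ :=
    integrable_of_bdd (mΩ := mΩ) (measurable_const.indicator hAmΩ)
      (hindbdd (by linarith) (fun ω => le_of_eq (abs_of_nonneg (by linarith))))
  have hE3 : μ[A.indicator (fun ω' => gA ω' + 2*ε)|hσ.measurableSpace]
      + μ[B.indicator gB|hσ.measurableSpace] + μ[C.indicator gC|hσ.measurableSpace]
      =ᵐ[μ] μ[dynkinKernel (X1v μ 𝓕 U) (Y1v μ 𝓕 U) (Zv U) ρ.1 τσε|hσ.measurableSpace]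
        + μ[A.indicator (fun _ => 2*ε)|hσ.measurableSpace] := by
    have e1 : μ[A.indicator (fun ω' => gA ω' + 2*ε)|hσ.measurableSpace]
        + μ[B.indicator gB|hσ.measurableSpace] + μ[C.indicator gC|hσ.measurableSpace]
        =ᵐ[μ] μ[A.indicator (fun ω' => gA ω' + 2*ε) + B.indicator gB
            + C.indicator gC|hσ.measurableSpace] :=
      (((condExp_add (m := hσ.measurableSpace) (hintgA2.add hintgB2) hintgC).trans
        ((condExp_add (m := hσ.measurableSpace) hintgA2 hintgB2).add
          EventuallyEq.rfl))).symm
    rw [hE3eq] at e1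
    exact e1.trans (condExp_add (m := hσ.measurableSpace) hintker hint2ε)
  have hE4 : ∀ ω, (μ[A.indicator (fun _ : Ω => 2*ε)|hσ.measurableSpace]) ω ≤ 2*ε := by
    have hmono := condExp_mono (m := hσ.measurableSpace) (m₀ := mΩ) hint2ε
      (integrable_const (2*ε))
      (ae_of_all _ (fun ω => by
        by_cases hω : ω ∈ A
        · rw [Set.indicator_of_mem hω]
        · rw [Set.indicator_of_notMem hω]; show (0:ℝ) ≤ 2*ε; linarith))
    have hc : μ[(fun _ : Ω => 2*ε)|hσ.measurableSpace] = fun _ => 2*ε :=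
      condExp_const (m₀ := mΩ) hmle _
    have hall := ae_all_of_charge (mΩ := mΩ) hcharge hmono
    intro ω
    have := hall ω
    rwa [hc] at this
  -- pointwise versions
  have hE1' := ae_all_of_charge (mΩ := mΩ) hcharge hE1
  have hE2A' := ae_all_of_charge (mΩ := mΩ) hcharge hE2A
  have hE2B' := ae_all_of_charge (mΩ := mΩ) hcharge hE2B
  have hE3' := ae_all_of_charge (mΩ := mΩ) hcharge hE3
  have hsad : ∀ ρ₀' τ₀' : Ω → ℝ≥0∞, ρ₀' ∈ STge 𝓕 σ → τ₀' ∈ STge 𝓕 σ → ∀ ω,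
      condDynkin μ hσ.measurableSpace (X1v μ 𝓕 U) (Y1v μ 𝓕 U) (Zv U) ρ₀' τσε ω - ε ≤
        condDynkin μ hσ.measurableSpace (X1v μ 𝓕 U) (Y1v μ 𝓕 U) (Zv U) ρσε τσε ω ∧
      condDynkin μ hσ.measurableSpace (X1v μ 𝓕 U) (Y1v μ 𝓕 U) (Zv U) ρσε τσε ω ≤
        condDynkin μ hσ.measurableSpace (X1v μ 𝓕 U) (Y1v μ 𝓕 U) (Zv U) ρσε τ₀' ω + ε :=
    fun a b ha hb => ae_all_of_charge (mΩ := mΩ) hcharge (hsaddle a b ha hb)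
  haveI hSTσne : Nonempty (STge 𝓕 σ) := ⟨⟨τσε, hτσε⟩⟩
  refine ae_of_all _ fun ω => ?_
  have e0 : condPayoff μ hσ.measurableSpace U ρ (τσε, gridStrat h τbar) ω
      = (μ[f|hσ.measurableSpace]) ω := by rw [hfdef]; rfl
  have h1 := hE1' ω
  simp only [Pi.add_apply] at h1
  have h3 := hE3' ω
  simp only [Pi.add_apply] at h3
  have hcd0 : condDynkin μ hσ.measurableSpace (X1v μ 𝓕 U) (Y1v μ 𝓕 U) (Zv U) ρ.1 τσε ω
      = (μ[dynkinKernel (X1v μ 𝓕 U) (Y1v μ 𝓕 U) (Zv U) ρ.1 τσε|hσ.measurableSpace]) ω := rfl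
  have step1 : condPayoff μ hσ.measurableSpace U ρ (τσε, gridStrat h τbar) ω ≤
      condDynkin μ hσ.measurableSpace (X1v μ 𝓕 U) (Y1v μ 𝓕 U) (Zv U) ρ.1 τσε ω + 2*ε := by
    rw [e0, hcd0]
    have h2a := hE2A' ω
    have h2b := hE2B' ω
    have h4 := hE4 ω
    linarith
  have step2 := (hsad ρ.1 τσε ⟨hρ₀st, hρge⟩ hτσε ω).1
  have step3 : condDynkin μ hσ.measurableSpace (X1v μ 𝓕 U) (Y1v μ 𝓕 U) (Zv U) ρσε τσε ω - ε
      ≤ ⨅ τ₀ : STge 𝓕 σ,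
        condDynkin μ hσ.measurableSpace (X1v μ 𝓕 U) (Y1v μ 𝓕 U) (Zv U) ρσε τ₀.1 ω := by
    refine le_ciInf fun τ₀ => ?_
    have := (hsad ρσε τ₀.1 hρσε τ₀.2 ω).2
    linarith
  have hbddb : ∀ ρ₀' : STge 𝓕 σ, BddBelow (Set.range fun τ₀ : STge 𝓕 σ =>
      condDynkin μ hσ.measurableSpace (X1v μ 𝓕 U) (Y1v μ 𝓕 U) (Zv U) ρ₀'.1 τ₀.1 ω) := by
    intro ρ₀'
    refine ⟨-M, ?_⟩
    rintro x ⟨τ₀, rfl⟩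
    exact (abs_le.mp (hcdBdd ρ₀'.2.1 τ₀.2.1 ω)).1
  have hbdda2 : BddAbove (Set.range fun ρ₀' : STge 𝓕 σ => ⨅ τ₀ : STge 𝓕 σ,
      condDynkin μ hσ.measurableSpace (X1v μ 𝓕 U) (Y1v μ 𝓕 U) (Zv U) ρ₀'.1 τ₀.1 ω) := by
    refine ⟨M, ?_⟩
    rintro x ⟨ρ₀', rfl⟩
    exact le_trans (ciInf_le (hbddb ρ₀') ⟨τσε, hτσε⟩)
      (abs_le.mp (hcdBdd ρ₀'.2.1 hτσε.1 ω)).2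
  have step4 : (⨅ τ₀ : STge 𝓕 σ,
      condDynkin μ hσ.measurableSpace (X1v μ 𝓕 U) (Y1v μ 𝓕 U) (Zv U) ρσε τ₀.1 ω)
      ≤ ⨆ ρ₀' : STge 𝓕 σ, ⨅ τ₀ : STge 𝓕 σ,
        condDynkin μ hσ.measurableSpace (X1v μ 𝓕 U) (Y1v μ 𝓕 U) (Zv U) ρ₀'.1 τ₀.1 ω :=
    le_ciSup hbdda2 ⟨ρσε, hρσε⟩
  linarith


end StoppingGames
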